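/- Let q ≥ 2 be a prime power and a an integer with a² ≤ 4q, and let α, β ∈ ℂ be the two roots of x² − ax + q. Suppose α/β is a primitive m-th root of unity. Then for every positive integer n divisible by m, there exists a nonnegative integer u with q^n + 1 − (α^n + β^n) = u². -/

import Mathlib

/-- The integer sequence `αⁿ + βⁿ` where `α + β = a`, `α * β = q`. -/
def traceSeq (a : ℤ) (q : ℕ) : ℕ → ℤ
  | 0 => 2
  | 1 => a
  | (n + 2) => a * traceSeq a q (n + 1) - (q : ℤ) * traceSeq a q n

lemma traceSeq_spec (a : ℤ) (q : ℕ) (α β : ℂ)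
    (hsum : α + β = (a : ℂ)) (hprod : α * β = (q : ℂ)) :
    ∀ n : ℕ, α ^ n + β ^ n = ((traceSeq a q n : ℤ) : ℂ) := by
  intro n
  induction n using Nat.twoStepInduction with
  | zero => norm_num [traceSeq]
  | one => simpa [traceSeq] using hsum
  | more n ih1 ih2 =>
    have key : α ^ (n + 2) + β ^ (n + 2)
        = (α + β) * (α ^ (n + 1) + β ^ (n + 1)) - (α * β) * (α ^ n + β ^ n) := by
      ring
    rw [key, hsum, hprod, ih1, ih2]
    show _ = ((traceSeq a q (n + 2) : ℤ) : ℂ)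
    simp only [traceSeq]
    push_cast
    ring

theorem square_when_m_divides
    (q : ℕ) (hq : IsPrimePow q) (hq2 : 2 ≤ q)
    (a : ℤ) (ha : a ^ 2 ≤ 4 * (q : ℤ))
    (α β : ℂ) (hsum : α + β = (a : ℂ)) (hprod : α * β = (q : ℂ))
    (m : ℕ) (hm : IsPrimitiveRoot (α / β) m) :
    ∀ n : ℕ, 0 < n → m ∣ n →
      ∃ u : ℕ, (q : ℂ) ^ n + 1 - (α ^ n + β ^ n) = (u : ℂ) ^ 2 := by
  intro n hn hmn
  have hqC : (q : ℂ) ≠ 0 := by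
    exact_mod_cast Nat.cast_ne_zero.mpr (by omega)
  have hβ : β ≠ 0 := by
    intro h; apply hqC; rw [← hprod, h, mul_zero]
  obtain ⟨k, rfl⟩ := hmn
  have hpow : (α / β) ^ (m * k) = 1 := by
    rw [pow_mul, hm.pow_eq_one, one_pow]
  have hαβ : α ^ (m * k) = β ^ (m * k) := by
    field_simp [div_pow] at hpow
    exact (div_eq_one_iff_eq (pow_ne_zero _ hβ)).mp (by rw [← div_pow, pow_mul, hm.pow_eq_one, one_pow])
  set n := m * k with hn'
  have hS := traceSeq_spec a q α β hsum hprod n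
  set s : ℤ := traceSeq a q n with hsdef
  have h2α : 2 * α ^ n = (s : ℂ) := by rw [← hS, hαβ]; ring
  have hsq : (s : ℤ) ^ 2 = 4 * (q : ℤ) ^ n := by
    have : ((s : ℤ) : ℂ) ^ 2 = ((4 * (q : ℤ) ^ n : ℤ) : ℂ) := by
      rw [← h2α]
      have : (2 * α ^ n) ^ 2 = 4 * (α ^ n * β ^ n) := by rw [hαβ]; ring
      rw [this, ← mul_pow, hprod]
      push_cast
      ring
    exact_mod_cast this
  have heven : Even s := by
    have h2 : Even (s ^ 2) := ⟨2 * (q : ℤ) ^ n, by rw [hsq]; ring⟩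
    exact (Int.even_pow.mp h2).1
  obtain ⟨t, ht⟩ := heven
  have hts : s = 2 * t := by omega
  have ht2 : t ^ 2 = (q : ℤ) ^ n := by
    have h4 : 4 * t ^ 2 = 4 * (q : ℤ) ^ n := by rw [← hsq, hts]; ring
    linarith
  refine ⟨(t - 1).natAbs, ?_⟩
  have h1 : ((t - 1).natAbs : ℤ) ^ 2 = (t - 1) ^ 2 := by
    rw [sq, sq, Int.natAbs_mul_self']
  have hqn : ((q : ℂ)) ^ n = ((t : ℂ)) ^ 2 := by
    have := congrArg (fun z : ℤ => (z : ℂ)) ht2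
    push_cast at this
    rw [← this]
  have hSn : α ^ n + β ^ n = ((2 * t : ℤ) : ℂ) := by rw [hS, ← hts]
  have hcast : (((t - 1).natAbs : ℕ) : ℂ) ^ 2 = (((t - 1) ^ 2 : ℤ) : ℂ) := by
    rw [← h1]; norm_cast
  rw [hSn, hcast, hqn]
  push_cast
  ring
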